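/- Let V be a finite-dimensional real vector space, D ⊆ V ⊕ V* Lagrangian for the pairing ⟨(u,α),(v,β)⟩ = β(u) + α(v), and K ⊆ V a subspace with 𝒦 = K ⊕ {0} and 𝒦^⊥ = V ⊕ K°. Then the quotient ((D ∩ 𝒦^⊥) + 𝒦)/𝒦 has dimension dim V − dim K. -/

import Mathlib

open Module

/-- The canonical symmetric pairing on `V ⊕ V*`:
`⟨(u,α),(v,β)⟩ = β(u) + α(v)`. -/
noncomputable def pairingForm (V : Type*) [AddCommGroup V] [Module ℝ V] :
    LinearMap.BilinForm ℝ (V × Module.Dual ℝ V) :=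
  LinearMap.mk₂ ℝ (fun p q => q.2 p.1 + p.2 q.1)
    (fun p p' q => by
      simp only [Prod.fst_add, Prod.snd_add, map_add, LinearMap.add_apply]; ring)
    (fun c p q => by
      simp only [Prod.smul_fst, Prod.smul_snd, map_smul, LinearMap.smul_apply,
        smul_eq_mul]; ring)
    (fun p q q' => by
      simp only [Prod.fst_add, Prod.snd_add, map_add, LinearMap.add_apply]; ring)
    (fun p c q => by
      simp only [Prod.smul_fst, Prod.smul_snd, map_smul, LinearMap.smul_apply,
        smul_eq_mul]; ring)


variable (V : Type*) [AddCommGroup V] [Module ℝ V]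

/-- `𝒦 = K ⊕ {0} ⊆ V ⊕ V*`. -/
noncomputable def Kdirac (K : Submodule ℝ V) : Submodule ℝ (V × Module.Dual ℝ V) :=
  K.prod ⊥

/-- `𝒦^⊥ = V ⊕ K°`, the orthogonal of `𝒦` for the canonical pairing. -/
noncomputable def KdiracPerp (K : Submodule ℝ V) : Submodule ℝ (V × Module.Dual ℝ V) :=
  (⊤ : Submodule ℝ V).prod K.dualAnnihilator

lemma pairingForm_apply (p q : V × Module.Dual ℝ V) :
    pairingForm V p q = q.2 p.1 + p.2 q.1 := rfl

lemma pairingForm_isRefl : (pairingForm V).IsRefl := by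
  intro p q h
  simp only [pairingForm_apply] at *
  linarith

lemma pairingForm_nondegenerate : (pairingForm V).Nondegenerate := by
  refine (LinearMap.IsRefl.nondegenerate_iff_separatingLeft (pairingForm_isRefl V)).mpr ?_
  intro p hp
  have h1 : p.2 = 0 := by
    ext u
    have := hp (u, 0)
    simpa [pairingForm_apply] using this
  have h2 : p.1 = 0 := by
    rw [← Module.forall_dual_apply_eq_zero_iff ℝ]
    intro φ
    have := hp (0, φ)
    simpa [pairingForm_apply] using this
  exact Prod.ext h2 h1

lemma orthogonal_Kdirac (K : Submodule ℝ V) :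
    (pairingForm V).orthogonal (Kdirac V K) = KdiracPerp V K := by
  ext ⟨v, β⟩
  simp only [LinearMap.BilinForm.mem_orthogonal_iff, Kdirac, KdiracPerp,
    Submodule.mem_prod, Submodule.mem_top, true_and, Submodule.mem_dualAnnihilator,
    LinearMap.BilinForm.isOrtho_def]
  constructor
  · intro h u hu
    have := h (u, 0) ⟨hu, Submodule.zero_mem _⟩
    simpa [pairingForm_apply] using this
  · rintro h ⟨u, α⟩ ⟨hu, hα⟩
    simp only [Submodule.mem_bot] at hα
    simp [pairingForm_apply, hα, h u hu]

lemma orthogonal_sup (B : LinearMap.BilinForm ℝ (V × Module.Dual ℝ V))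
    (A C : Submodule ℝ (V × Module.Dual ℝ V)) :
    B.orthogonal (A ⊔ C) = B.orthogonal A ⊓ B.orthogonal C := by
  ext p
  simp only [LinearMap.BilinForm.mem_orthogonal_iff, Submodule.mem_inf]
  constructor
  · intro h
    exact ⟨fun n hn => h n (Submodule.mem_sup_left hn),
      fun n hn => h n (Submodule.mem_sup_right hn)⟩
  · rintro ⟨h1, h2⟩ n hn
    rcases Submodule.mem_sup.mp hn with ⟨a, ha, c, hc, rfl⟩
    have := h1 a ha
    have := h2 c hc
    rw [LinearMap.BilinForm.add_left]
    simp_all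

set_option maxHeartbeats 1000000 in
/-- for a Lagrangian `D ⊆ V ⊕ V*` and a subspace `K ⊆ V`, the
quotient `((D ∩ 𝒦^⊥) + 𝒦)/𝒦` has dimension `dim V − dim K`. -/
theorem Dtilde_finrank
    [FiniteDimensional ℝ V]
    (D : Submodule ℝ (V × Module.Dual ℝ V))
    (hD : D = (pairingForm V).orthogonal D)
    (K : Submodule ℝ V) :
    Module.finrank ℝ
        (((D ⊓ KdiracPerp V K) ⊔ Kdirac V K).map (Kdirac V K).mkQ)
      = Module.finrank ℝ V - Module.finrank ℝ K := by
  have hRefl := pairingForm_isRefl V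
  have hNd := pairingForm_nondegenerate V
  set n := Module.finrank ℝ V with hn
  set k := Module.finrank ℝ K with hk
  -- total dim
  have htot : Module.finrank ℝ (V × Module.Dual ℝ V) = n + n := by
    rw [Module.finrank_prod, Subspace.dual_finrank_eq]
  -- finrank Kdirac = k
  have hK : Module.finrank ℝ (Kdirac V K) = k := by
    rw [Kdirac, ← Submodule.map_inl]
    exact ((Submodule.equivMapOfInjective _ LinearMap.inl_injective K).finrank_eq).symm
  -- finrank D = n
  have hDn : Module.finrank ℝ D = n := by
    have := LinearMap.BilinForm.finrank_orthogonal hNd D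
    rw [← hD, htot] at this
    have hle : Module.finrank ℝ D ≤ n + n := by
      rw [← htot]; exact Submodule.finrank_le D
    omega
  -- D ⊓ perp = orthogonal (D ⊔ Kdirac)
  have hOrth : D ⊓ KdiracPerp V K = (pairingForm V).orthogonal (D ⊔ Kdirac V K) := by
    rw [orthogonal_sup, ← hD, orthogonal_Kdirac]
  have hperp : Module.finrank ℝ (D ⊓ KdiracPerp V K : Submodule ℝ _)
      = (n + n) - Module.finrank ℝ (D ⊔ Kdirac V K : Submodule ℝ _) := by
    rw [hOrth, LinearMap.BilinForm.finrank_orthogonal hNd, htot]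
  have hsup1 : Module.finrank ℝ (D ⊔ Kdirac V K : Submodule ℝ _)
      + Module.finrank ℝ (D ⊓ Kdirac V K : Submodule ℝ _)
      = Module.finrank ℝ D + Module.finrank ℝ (Kdirac V K) :=
    Submodule.finrank_sup_add_finrank_inf_eq D (Kdirac V K)
  -- Kdirac ≤ KdiracPerp
  have hKle : Kdirac V K ≤ KdiracPerp V K := by
    rintro ⟨u, α⟩ ⟨hu, hα⟩
    obtain rfl : α = 0 := Submodule.mem_bot ℝ |>.mp hα
    exact ⟨trivial, by simp⟩
  have hinf : (D ⊓ KdiracPerp V K) ⊓ Kdirac V K = D ⊓ Kdirac V K := by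
    rw [inf_assoc, inf_eq_right.mpr hKle]
  have hsup2 : Module.finrank ℝ ((D ⊓ KdiracPerp V K) ⊔ Kdirac V K : Submodule ℝ _)
      + Module.finrank ℝ (D ⊓ Kdirac V K : Submodule ℝ _)
      = Module.finrank ℝ (D ⊓ KdiracPerp V K : Submodule ℝ _)
        + Module.finrank ℝ (Kdirac V K) := by
    rw [← hinf]
    exact Submodule.finrank_sup_add_finrank_inf_eq _ _
  -- quotient map rank
  set S := (D ⊓ KdiracPerp V K) ⊔ Kdirac V K with hS
  clear_value S
  have hKS : Kdirac V K ≤ S := hS ▸ le_sup_right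
  have hquot : Module.finrank ℝ (S.map (Kdirac V K).mkQ) + k = Module.finrank ℝ S := by
    have hrn := LinearMap.finrank_range_add_finrank_ker
      (K := ℝ) (V := S) (V₂ := (V × Module.Dual ℝ V) ⧸ Kdirac V K)
      (((Kdirac V K).mkQ).comp (S.subtype))
    rw [LinearMap.range_comp, Submodule.range_subtype, LinearMap.ker_comp,
      Submodule.ker_mkQ] at hrn
    have h2 := Submodule.finrank_map_subtype_eq S (Submodule.comap S.subtype (Kdirac V K))
    rw [Submodule.map_comap_subtype, inf_eq_right.mpr hKS, hK] at h2
    rw [← h2] at hrn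
    exact hrn
  -- bounds
  have hkn : k ≤ n := Submodule.finrank_le K
  have hDsup_le : Module.finrank ℝ (D ⊔ Kdirac V K : Submodule ℝ _) ≤ n + n := by
    rw [← htot]; exact Submodule.finrank_le _
  rw [hK] at hsup1 hsup2
  omega
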